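/- Let E be a real inner product space, let p ≥ 1, and let φ_p(x) = (1/(p+1))‖x‖^{p+1}, whose gradient is ∇φ_p(y) = ‖y‖^{p−1} y. Then for all x, y ∈ E the Bregman divergence satisfies D_{φ_p}(x,y) = φ_p(x) − φ_p(y) − ⟨∇φ_p(y), x−y⟩ ≥ (1/2^{p−1}) · (1/(p+1)) · ‖x−y‖^{p+1}. Equivalently, φ_p is (σ, r)-uniformly convex with σ = (p+1)/2^{p−1} and r = p+1. -/

import Mathlib

open RealInnerProductSpace


lemma rpow_superadd {x y s : ℝ} (hx : 0 ≤ x) (hy : 0 ≤ y) (hs : 1 ≤ s) :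
    x ^ s + y ^ s ≤ (x + y) ^ s := by
  have hs0 : 0 ≤ s - 1 := by linarith
  have hxy : 0 ≤ x + y := by linarith
  have key : ∀ z : ℝ, 0 ≤ z → z ≤ x + y → z ^ s ≤ z * (x + y) ^ (s - 1) := by
    intro z hz hzle
    rcases eq_or_lt_of_le hz with h0 | h0
    · rw [← h0, Real.zero_rpow (by linarith : s ≠ 0), zero_mul]
    · calc z ^ s = z * z ^ (s - 1) := by
            rw [show s = 1 + (s - 1) by ring, Real.rpow_add h0, Real.rpow_one]; ring_nf
        _ ≤ z * (x + y) ^ (s - 1) :=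
            mul_le_mul_of_nonneg_left (Real.rpow_le_rpow hz hzle hs0) hz
  have h1 := key x hx (by linarith)
  have h2 := key y hy (by linarith)
  have h3 : (x + y) ^ s = (x + y) * (x + y) ^ (s - 1) := by
    rcases eq_or_lt_of_le hxy with h0 | h0
    · rw [← h0, Real.zero_rpow (by linarith : s ≠ 0), zero_mul]
    · rw [show s = 1 + (s - 1) by ring, Real.rpow_add h0, Real.rpow_one]; ring_nf
  rw [h3]; nlinarith

lemma rpow_succ' {a s : ℝ} (ha : 0 ≤ a) (hs1 : s + 1 ≠ 0) : a ^ (s + 1) = a ^ s * a := by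
  rcases eq_or_lt_of_le ha with h0 | h0
  · rw [← h0, Real.zero_rpow hs1, mul_zero]
  · rw [Real.rpow_add h0, Real.rpow_one]

-- E2 : antipodal case
lemma E2 {q a b : ℝ} (hq : 2 ≤ q) (ha : 0 ≤ a) (hb : 0 ≤ b) :
    (2:ℝ) ^ (2 - q) * (a + b) ^ q ≤ (a ^ (q-1) + b ^ (q-1)) * (a + b) := by
  have hq1 : (1:ℝ) ≤ q - 1 := by linarith
  have hab : 0 ≤ a + b := by linarith
  -- midpoint convexity of rpow (q-1)
  have hconv := (convexOn_rpow (by linarith : (1:ℝ) ≤ q - 1)).2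
    (Set.mem_Ici.2 ha) (Set.mem_Ici.2 hb) (by norm_num : (0:ℝ) ≤ 1/2)
    (by norm_num : (0:ℝ) ≤ 1/2) (by norm_num)
  simp only [smul_eq_mul] at hconv
  -- hconv : (1/2*a + 1/2*b)^(q-1) ≤ 1/2*a^(q-1) + 1/2*b^(q-1)
  have hid : (2:ℝ) ^ (2 - q) * (a + b) ^ q = 2 * (1/2*a + 1/2*b) ^ (q-1) * (a + b) := by
    have h1 : (1/2*a + 1/2*b) ^ (q-1) = ((a+b)/2) ^ (q-1) := by ring_nf
    have h2 : ((a+b)/2) ^ (q-1) = (a+b) ^ (q-1) / 2 ^ (q-1) := Real.div_rpow hab (by norm_num : (0:ℝ) ≤ 2) (q-1)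
    have h3 : (a + b) ^ q = (a + b) ^ (q-1) * (a+b) := by
      have := rpow_succ' (s := q - 1) hab (by linarith)
      simpa using this
    have h4 : (2:ℝ) ^ (2 - q) * 2 ^ (q - 1) = 2 := by
      rw [← Real.rpow_add (by norm_num)]; norm_num
    have h5 : (0:ℝ) < 2 ^ (q-1) := Real.rpow_pos_of_pos (by norm_num) _
    have h6 : (2:ℝ) ^ (2-q) = 2 / 2^(q-1) := by
      rw [eq_div_iff (ne_of_gt h5)]; exact h4
    rw [h1, h2, h3, h6]; ring
  rw [hid]
  nlinarith [hconv, hab]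

lemma E1aux {q a b : ℝ} (hq : 2 ≤ q) (hb : 0 ≤ b) (hba : b ≤ a) :
    (2:ℝ) ^ (2 - q) * (a - b) ^ q ≤ (a ^ (q-1) - b ^ (q-1)) * (a - b) := by
  have hab : 0 ≤ a - b := by linarith
  have h2le : (2:ℝ) ^ (2 - q) ≤ 1 :=
    Real.rpow_le_one_of_one_le_of_nonpos (by norm_num) (by linarith)
  have hsup : b ^ (q-1) + (a - b) ^ (q-1) ≤ a ^ (q-1) := by
    have := rpow_superadd hb hab (by linarith : (1:ℝ) ≤ q - 1)
    simpa using this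
  have hpow : (a - b) ^ q = (a - b) ^ (q-1) * (a - b) := by
    have := rpow_succ' (s := q - 1) hab (by linarith)
    simpa using this
  have h1 : (2:ℝ) ^ (2 - q) * (a - b) ^ q ≤ (a - b) ^ q := by
    have hnn : 0 ≤ (a - b) ^ q := Real.rpow_nonneg hab q
    nlinarith
  refine h1.trans ?_
  rw [hpow]
  exact mul_le_mul_of_nonneg_right (by linarith) hab

lemma E1 {q a b : ℝ} (hq : 2 ≤ q) (ha : 0 ≤ a) (hb : 0 ≤ b) :
    (2:ℝ) ^ (2 - q) * |a - b| ^ q ≤ (a ^ (q-1) - b ^ (q-1)) * (a - b) := by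
  rcases le_total b a with h | h
  · rw [abs_of_nonneg (by linarith)]; exact E1aux hq hb h
  · rw [abs_of_nonpos (by linarith)]
    have := E1aux hq ha h
    have heq : (b ^ (q-1) - a ^ (q-1)) * (b - a) = (a ^ (q-1) - b ^ (q-1)) * (a - b) := by ring
    rw [heq] at this
    simpa [neg_sub] using this

lemma sq_rpow_half {a q : ℝ} (ha : 0 ≤ a) : ((a^2 : ℝ)) ^ (q/2) = a ^ q := by
  rw [← Real.rpow_natCast a 2, ← Real.rpow_mul ha]
  norm_num
  rw [show (2:ℝ)*(q/2) = q by ring]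

lemma key_scalar {q a b w : ℝ} (hq : 2 ≤ q) (ha : 0 ≤ a) (hb : 0 ≤ b) (hw : |w| ≤ a * b) :
    (2:ℝ)^(2-q) * (a^2 + b^2 - 2*w) ^ (q/2) ≤ a ^ q + b ^ q - (a^(q-2) + b^(q-2)) * w := by
  have hq0 : q ≠ 0 := by linarith
  have h2nn : (0:ℝ) ≤ 2^(2-q) := (Real.rpow_pos_of_pos (by norm_num) _).le
  rcases eq_or_lt_of_le (mul_nonneg ha hb) with hab0 | hab0
  · -- a*b = 0, so w = 0
    have hw0 : w = 0 := by
      have := abs_nonneg w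
      have : |w| = 0 := le_antisymm (hw.trans hab0.symm.le) (abs_nonneg w)
      exact abs_eq_zero.mp this
    subst hw0
    rcases mul_eq_zero.mp hab0.symm with h0 | h0
    · subst h0
      rw [Real.zero_rpow hq0]
      have h1 : ((0:ℝ)^2 + b^2 - 2*0) = b^2 := by ring
      rw [h1, sq_rpow_half hb]
      have h2le : (2:ℝ) ^ (2 - q) ≤ 1 :=
        Real.rpow_le_one_of_one_le_of_nonpos (by norm_num) (by linarith)
      have hbq : 0 ≤ b ^ q := Real.rpow_nonneg hb q
      nlinarith
    · subst h0
      rw [Real.zero_rpow hq0]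
      have h1 : (a^2 + (0:ℝ)^2 - 2*0) = a^2 := by ring
      rw [h1, sq_rpow_half ha]
      have h2le : (2:ℝ) ^ (2 - q) ≤ 1 :=
        Real.rpow_le_one_of_one_le_of_nonpos (by norm_num) (by linarith)
      have haq : 0 ≤ a ^ q := Real.rpow_nonneg ha q
      nlinarith
  · -- a*b > 0
    have ha' : 0 < a := lt_of_le_of_ne ha (by rintro rfl; simp at hab0)
    have hb' : 0 < b := lt_of_le_of_ne hb (by rintro rfl; simp at hab0)
    set θ : ℝ := (a*b - w)/(2*(a*b)) with hθdef
    have hwl : -(a*b) ≤ w := neg_le_of_abs_le hw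
    have hwr : w ≤ a*b := le_of_abs_le hw
    have hθ0 : 0 ≤ θ := div_nonneg (by linarith) (by linarith)
    have hθ1 : θ ≤ 1 := by
      rw [div_le_one (by linarith : (0:ℝ) < 2*(a*b))]; linarith
    have hmem1 : ((a+b)^2 : ℝ) ∈ Set.Ici (0:ℝ) := Set.mem_Ici.2 (sq_nonneg _)
    have hmem2 : ((a-b)^2 : ℝ) ∈ Set.Ici (0:ℝ) := Set.mem_Ici.2 (sq_nonneg _)
    have hconv := (convexOn_rpow (by linarith : (1:ℝ) ≤ q/2)).2 hmem1 hmem2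
      hθ0 (by linarith : (0:ℝ) ≤ 1 - θ) (by ring)
    simp only [smul_eq_mul] at hconv
    have hargeq : θ * (a+b)^2 + (1-θ) * (a-b)^2 = a^2 + b^2 - 2*w := by
      have hθm : θ * (2*(a*b)) = a*b - w := by
        rw [hθdef]; exact div_mul_cancel₀ _ (mul_pos two_pos hab0).ne'
      linear_combination 2 * hθm
    rw [hargeq] at hconv
    have hsq1 : ((a+b)^2 : ℝ) ^ (q/2) = (a+b) ^ q := sq_rpow_half (by linarith)
    have hsq2 : ((a-b)^2 : ℝ) ^ (q/2) = |a-b| ^ q := by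
      rw [← sq_abs]; exact sq_rpow_half (abs_nonneg _)
    rw [hsq1, hsq2] at hconv
    -- multiply by 2^(2-q) and use E1, E2
    have step1 : (2:ℝ)^(2-q) * (a^2 + b^2 - 2*w) ^ (q/2)
        ≤ θ * ((2:ℝ)^(2-q) * (a+b)^q) + (1-θ) * ((2:ℝ)^(2-q) * |a-b|^q) := by
      have := mul_le_mul_of_nonneg_left hconv h2nn
      nlinarith [this]
    have step2 : θ * ((2:ℝ)^(2-q) * (a+b)^q) + (1-θ) * ((2:ℝ)^(2-q) * |a-b|^q)
        ≤ θ * ((a^(q-1) + b^(q-1)) * (a+b)) + (1-θ) * ((a^(q-1) - b^(q-1)) * (a-b)) := by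
      have h1 := E2 hq ha hb
      have h2 := E1 hq ha hb
      have := add_le_add (mul_le_mul_of_nonneg_left h1 hθ0)
        (mul_le_mul_of_nonneg_left h2 (by linarith : (0:ℝ) ≤ 1 - θ))
      linarith
    have hA : a^(q-1) = a^(q-2) * a := by
      have := rpow_succ' (s := q-2) ha (by linarith)
      rw [show q - 2 + 1 = q - 1 by ring] at this
      exact this
    have hB : b^(q-1) = b^(q-2) * b := by
      have := rpow_succ' (s := q-2) hb (by linarith)
      rw [show q - 2 + 1 = q - 1 by ring] at this
      exact this
    have hAq : a^q = a^(q-1) * a := by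
      have := rpow_succ' (s := q-1) ha (by linarith)
      rw [show q - 1 + 1 = q by ring] at this
      exact this
    have hBq : b^q = b^(q-1) * b := by
      have := rpow_succ' (s := q-1) hb (by linarith)
      rw [show q - 1 + 1 = q by ring] at this
      exact this
    have step3 : θ * ((a^(q-1) + b^(q-1)) * (a+b)) + (1-θ) * ((a^(q-1) - b^(q-1)) * (a-b))
        = a ^ q + b ^ q - (a^(q-2) + b^(q-2)) * w := by
      rw [hAq, hBq, hA, hB, hθdef]
      field_simp
      ring
    linarith

lemma rpow_sub_two_mul_sq {a q : ℝ} (ha : 0 ≤ a) (hq : 2 ≤ q) : a^(q-2) * a^2 = a^q := by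
  rcases eq_or_lt_of_le ha with h0 | h0
  · rw [← h0]
    rw [Real.zero_rpow (by linarith : q ≠ 0)]
    norm_num
  · rw [← Real.rpow_natCast a 2, ← Real.rpow_add h0]
    norm_num

open RealInnerProductSpace in
lemma grad_mono {E : Type*} [NormedAddCommGroup E] [InnerProductSpace ℝ E]
    {q : ℝ} (hq : 2 ≤ q) (u v : E) :
    (2:ℝ)^(2-q) * ‖u - v‖ ^ q ≤ ⟪(‖u‖^(q-2)) • u - (‖v‖^(q-2)) • v, u - v⟫ := by
  have hinner : ⟪(‖u‖^(q-2)) • u - (‖v‖^(q-2)) • v, u - v⟫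
      = ‖u‖^q + ‖v‖^q - (‖u‖^(q-2) + ‖v‖^(q-2)) * ⟪u, v⟫ := by
    simp only [inner_sub_left, inner_sub_right, real_inner_smul_left,
      real_inner_self_eq_norm_sq]
    rw [real_inner_comm v u]
    rw [← rpow_sub_two_mul_sq (norm_nonneg u) hq, ← rpow_sub_two_mul_sq (norm_nonneg v) hq]
    ring
  have hnorm : ‖u - v‖ ^ q = (‖u‖^2 + ‖v‖^2 - 2 * ⟪u, v⟫) ^ (q/2) := by
    rw [← sq_rpow_half (norm_nonneg (u - v)), norm_sub_sq_real]
    ring_nf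
  rw [hinner, hnorm]
  exact key_scalar hq (norm_nonneg u) (norm_nonneg v) (abs_real_inner_le_norm u v)

lemma sq_rpow {a e : ℝ} (ha : 0 ≤ a) : ((a^2:ℝ)) ^ e = a ^ (2*e) := by
  rw [← Real.rpow_natCast a 2, ← Real.rpow_mul ha]
  norm_num

open RealInnerProductSpace in
lemma bregman_power {E : Type*} [NormedAddCommGroup E] [InnerProductSpace ℝ E]
    {q : ℝ} (hq : 2 ≤ q) (x y : E) :
    2^(2-q) * (1/q) * ‖x - y‖^q
      ≤ (1/q) * ‖x‖^q - (1/q) * ‖y‖^q - ‖y‖^(q-2) * ⟪y, x - y⟫ := by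
  have hq0 : q ≠ 0 := by linarith
  have hq2 : (1:ℝ) ≤ q/2 := by linarith
  set w : E := x - y with hw
  set z : ℝ → E := fun t => y + t • w with hzdef
  set g : ℝ → ℝ := fun t => ⟪z t, z t⟫ with hgdef
  set C1 : ℝ := ‖y‖^(q-2) * ⟪y, w⟫ with hC1
  set C2 : ℝ := 2^(2-q) * (1/q) * ‖w‖^q with hC2
  set F : ℝ → ℝ := fun t => (1/q) * (g t)^(q/2) - t * C1 - C2 * t^q with hFdef
  set F' : ℝ → ℝ := fun t =>
    ‖z t‖^(q-2) * ⟪z t, w⟫ - C1 - C2 * (q * t^(q-1)) with hF'def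
  have hzd : ∀ t : ℝ, HasDerivAt z w t := by
    intro t
    have h1 : HasDerivAt (fun t : ℝ => t • w) ((1:ℝ) • w) t := (hasDerivAt_id t).smul_const w
    rw [one_smul] at h1
    exact h1.const_add y
  have hgd : ∀ t : ℝ, HasDerivAt g (2 * ⟪z t, w⟫) t := by
    intro t
    have := HasDerivAt.inner ℝ (hzd t) (hzd t)
    refine this.congr_deriv ?_
    rw [real_inner_comm (z t) w]
    ring
  have hgz : ∀ t, g t = ‖z t‖^2 := fun t => real_inner_self_eq_norm_sq (z t)
  have hΦd : ∀ t : ℝ, HasDerivAt (fun s => (1/q) * (g s)^(q/2))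
      (‖z t‖^(q-2) * ⟪z t, w⟫) t := by
    intro t
    have hpow := (Real.hasDerivAt_rpow_const (x := g t) (Or.inr hq2)).comp t (hgd t)
    have := hpow.const_mul (1/q)
    refine this.congr_deriv ?_
    rw [hgz t, sq_rpow (norm_nonneg (z t))]
    rw [show 2*(q/2 - 1) = q - 2 by ring]
    field_simp
  have hFd : ∀ t : ℝ, HasDerivAt F (F' t) t := by
    intro t
    have h1 : HasDerivAt (fun s : ℝ => s * C1) C1 t := by
      simpa using (hasDerivAt_id t).mul_const C1
    have h2 : HasDerivAt (fun s : ℝ => C2 * s^q) (C2 * (q * t^(q-1))) t :=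
      (Real.hasDerivAt_rpow_const (x := t) (Or.inr (by linarith))).const_mul C2
    exact ((hΦd t).sub h1).sub h2
  have hF'nonneg : ∀ t ∈ Set.Ioo (0:ℝ) 1, 0 ≤ F' t := by
    intro t ht
    have ht0 : 0 < t := ht.1
    have hgm := grad_mono hq (z t) y
    have hzy : z t - y = t • w := by simp [hzdef]
    rw [hzy] at hgm
    have hinner : ⟪(‖z t‖^(q-2)) • z t - (‖y‖^(q-2)) • y, t • w⟫
        = t * (‖z t‖^(q-2) * ⟪z t, w⟫ - ‖y‖^(q-2) * ⟪y, w⟫) := by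
      rw [real_inner_smul_right, inner_sub_left, real_inner_smul_left, real_inner_smul_left]
    have hnorm : ‖t • w‖^q = t^q * ‖w‖^q := by
      rw [norm_smul, Real.norm_eq_abs, abs_of_pos ht0, Real.mul_rpow ht0.le (norm_nonneg w)]
    rw [hinner, hnorm] at hgm
    have htq : t^q = t * t^(q-1) := by
      rw [show q = (q-1) + 1 by ring, rpow_succ' ht0.le (by linarith)]
      ring
    have hfac : 2^(2-q) * (t^q * ‖w‖^q) = t * (2^(2-q) * ‖w‖^q * t^(q-1)) := by
      rw [htq]; ring
    rw [hfac] at hgm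
    have := le_of_mul_le_mul_left (by linarith [hgm] :
      t * (2^(2-q) * ‖w‖^q * t^(q-1)) ≤ t * (‖z t‖^(q-2) * ⟪z t, w⟫ - ‖y‖^(q-2) * ⟪y, w⟫)) ht0
    have hC2q : C2 * (q * t^(q-1)) = 2^(2-q) * ‖w‖^q * t^(q-1) := by
      rw [hC2]; field_simp
    rw [hF'def]
    simp only
    rw [hC2q]
    linarith [this]
  have hFdiff : Differentiable ℝ F := fun t => (hFd t).differentiableAt
  have hmono : MonotoneOn F (Set.Icc (0:ℝ) 1) := by
    apply monotoneOn_of_deriv_nonneg (convex_Icc 0 1) hFdiff.continuous.continuousOn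
      hFdiff.differentiableOn
    intro t ht
    rw [interior_Icc] at ht
    rw [(hFd t).deriv]
    exact hF'nonneg t ht
  have hF01 : F 0 ≤ F 1 := hmono (Set.mem_Icc.2 ⟨le_refl 0, zero_le_one⟩)
    (Set.mem_Icc.2 ⟨zero_le_one, le_refl 1⟩) zero_le_one
  have hz0 : z 0 = y := by simp [hzdef]
  have hz1 : z 1 = x := by simp [hzdef, hw]
  have hF0 : F 0 = (1/q) * ‖y‖^q := by
    rw [hFdef]
    simp only
    rw [Real.zero_rpow hq0, hgz 0, hz0, sq_rpow (norm_nonneg y),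
      show 2*(q/2) = q by ring]
    ring
  have hF1 : F 1 = (1/q) * ‖x‖^q - C1 - C2 := by
    rw [hFdef]
    simp only
    rw [Real.one_rpow, hgz 1, hz1, sq_rpow (norm_nonneg x), show 2*(q/2) = q by ring]
    ring
  rw [hF0, hF1] at hF01
  rw [hC1, hC2] at hF01
  linarith


/-- **Corollary of Proposition 1.**  For `p ≥ 1` and
`φ_p(x) = (1/(p+1))‖x‖^(p+1)` with gradient `∇φ_p(y) = ‖y‖^(p−1) y`
in a real inner product space, the Bregman divergence satisfies
`D_{φ_p}(x,y) = φ_p(x) − φ_p(y) − ⟪∇φ_p(y), x−y⟫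
  ≥ (1/2^(p−1))·(1/(p+1))·‖x−y‖^(p+1)`;
equivalently, `φ_p` is `(σ,r)`-uniformly convex with `σ = (p+1)/2^(p−1)`
and `r = p+1`. -/
theorem power_function_uniformly_convex
    {E : Type*} [NormedAddCommGroup E] [InnerProductSpace ℝ E]
    (p : ℝ) (hp : 1 ≤ p) (x y : E) :
    (1 / (2 : ℝ) ^ (p - 1)) * (1 / (p + 1)) * ‖x - y‖ ^ (p + 1)
      ≤ (1 / (p + 1)) * ‖x‖ ^ (p + 1) - (1 / (p + 1)) * ‖y‖ ^ (p + 1)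
        - ⟪(‖y‖ ^ (p - 1)) • y, x - y⟫ := by
  have h := bregman_power (q := p + 1) (by linarith) x y
  rw [show p + 1 - 2 = p - 1 by ring] at h
  rw [show (2:ℝ) - (p+1) = -(p-1) by ring, Real.rpow_neg (by norm_num : (0:ℝ) ≤ 2)] at h
  rw [real_inner_smul_left]
  rw [← one_div] at h
  exact h
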